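/- Suppose {a_n}_{n=0}^∞ is a Stieltjes moment sequence with representing measure μ, κ is an integer ≥ 2, {a_n^{1/κ}}_{n=0}^∞ is a Stieltjes moment sequence with representing measure ν, and μ((θ1,θ2)) = 0 for some real θ1, θ2 with 0 ≤ θ1 < θ2. Then: (i) if {a_n}_{n=0}^∞ is determinate, then ν((θ1^{1/κ}, θ2^{1/κ})) = 0; (ii) if θ2 ≤ θ3 := sup supp μ < ∞, then ν(((θ1/θ3)·θ3^{1/κ}, (θ2/θ3)·θ3^{1/κ})) = 0. -/

import Mathlib

open MeasureTheory

/-- The closed support of a Borel measure: the set of points all of whose open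
neighbourhoods have positive measure. -/
def msupport {X : Type*} [TopologicalSpace X] [MeasurableSpace X] (μ : Measure X) : Set X :=
  {x | ∀ U : Set X, IsOpen U → x ∈ U → 0 < μ U}

/-- `μ` is a representing measure (on `[0,∞)`, modelled as a measure on `ℝ` vanishing on
`(-∞,0)`) of the Stieltjes moment sequence `a`. -/
def IsRepMeas (a : ℕ → ℝ) (μ : Measure ℝ) : Prop :=
  (∀ n, 0 ≤ a n) ∧ μ (Set.Iio 0) = 0 ∧
    ∀ n : ℕ, ∫⁻ x, ENNReal.ofReal (x ^ n) ∂μ = ENNReal.ofReal (a n)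

/-- `a` is a Stieltjes moment sequence. -/
def IsStieltjes (a : ℕ → ℝ) : Prop :=
  ∃ μ : Measure ℝ, IsRepMeas a μ

/-- A Stieltjes moment sequence is determinate if it has a unique representing measure. -/
def IsDeterminate (a : ℕ → ℝ) : Prop :=
  ∀ μ ν : Measure ℝ, IsRepMeas a μ → IsRepMeas a ν → μ = ν

lemma rep_univ {a : ℕ → ℝ} {μ : Measure ℝ} (h : IsRepMeas a μ) :
    μ Set.univ = ENNReal.ofReal (a 0) := by
  have := h.2.2 0
  simpa using this

lemma rep_finite {a : ℕ → ℝ} {μ : Measure ℝ} (h : IsRepMeas a μ) : IsFiniteMeasure μ :=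
  ⟨by rw [rep_univ h]; exact ENNReal.ofReal_lt_top⟩

lemma rep_ae_nonneg {a : ℕ → ℝ} {μ : Measure ℝ} (h : IsRepMeas a μ) :
    ∀ᵐ x ∂μ, 0 ≤ x := by
  rw [MeasureTheory.ae_iff]
  convert h.2.1 using 2
  ext x
  simp [Set.mem_Iio, not_le]

/-- If the measure lives on `[0, r]` then the `n`-th moment is at most `r^n * μ(univ)`. -/
lemma moment_le {μ : Measure ℝ} {r : ℝ} (h0 : ∀ᵐ x ∂μ, 0 ≤ x) (hr : μ (Set.Ioi r) = 0)
    (n : ℕ) : ∫⁻ x, ENNReal.ofReal (x ^ n) ∂μ ≤ ENNReal.ofReal (r ^ n) * μ Set.univ := by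
  have hle : ∀ᵐ x ∂μ, x ≤ r := by
    rw [MeasureTheory.ae_iff]
    convert hr using 2
    ext x; simp [not_le]
  have : ∀ᵐ x ∂μ, ENNReal.ofReal (x ^ n) ≤ ENNReal.ofReal (r ^ n) := by
    filter_upwards [h0, hle] with x hx hxr
    exact ENNReal.ofReal_le_ofReal (pow_le_pow_left₀ hx hxr n)
  calc ∫⁻ x, ENNReal.ofReal (x ^ n) ∂μ ≤ ∫⁻ _, ENNReal.ofReal (r ^ n) ∂μ :=
        lintegral_mono_ae this
    _ = ENNReal.ofReal (r ^ n) * μ Set.univ := by rw [lintegral_const]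

/-- If all moments are bounded by `C * r^n`, the measure vanishes on `(r, ∞)`. -/
lemma tail_null {μ : Measure ℝ} {C r : ℝ} (hr : 0 ≤ r)
    (h : ∀ n : ℕ, ∫⁻ x, ENNReal.ofReal (x ^ n) ∂μ ≤ ENNReal.ofReal (C * r ^ n)) :
    μ (Set.Ioi r) = 0 := by
  have key : ∀ s : ℝ, r < s → μ (Set.Ioi s) = 0 := by
    intro s hs
    have hs0 : 0 < s := lt_of_le_of_lt hr hs
    have hb : ∀ n : ℕ, μ (Set.Ioi s) ≤ ENNReal.ofReal (C * (r / s) ^ n) := by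
      intro n
      have h1 : ENNReal.ofReal (s ^ n) * μ (Set.Ioi s) ≤ ENNReal.ofReal (C * r ^ n) := by
        refine le_trans ?_ (h n)
        have : ENNReal.ofReal (s ^ n) * μ (Set.Ioi s)
            = ∫⁻ x in Set.Ioi s, ENNReal.ofReal (s ^ n) ∂μ := by
          rw [setLIntegral_const]
        rw [this]
        refine le_trans (setLIntegral_mono (by fun_prop) ?_) (setLIntegral_le_lintegral _ _)
        intro x hx
        exact ENNReal.ofReal_le_ofReal (pow_le_pow_left₀ hs0.le (le_of_lt hx) n)
      have hsn : (0:ℝ) < s ^ n := pow_pos hs0 n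
      calc μ (Set.Ioi s) = ENNReal.ofReal (s ^ n) * μ (Set.Ioi s) / ENNReal.ofReal (s ^ n) := by
            rw [mul_comm, mul_div_assoc, ENNReal.div_self (by simp [hsn]) (by simp), mul_one]
        _ ≤ ENNReal.ofReal (C * r ^ n) / ENNReal.ofReal (s ^ n) :=
            ENNReal.div_le_div_right h1 _
        _ = ENNReal.ofReal (C * (r / s) ^ n) := by
            rw [← ENNReal.ofReal_div_of_pos hsn]
            congr 1
            rw [div_pow, mul_div_assoc]
    have htend : Filter.Tendsto (fun n : ℕ => ENNReal.ofReal (C * (r / s) ^ n))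
        Filter.atTop (nhds 0) := by
      have : Filter.Tendsto (fun n : ℕ => C * (r / s) ^ n) Filter.atTop (nhds 0) := by
        have h1 : |r / s| < 1 := by
          rw [abs_of_nonneg (div_nonneg hr hs0.le)]
          rw [div_lt_one hs0]; exact hs
        simpa using (tendsto_pow_atTop_nhds_zero_of_abs_lt_one h1).const_mul C
      simpa [ENNReal.ofReal_zero] using (ENNReal.tendsto_ofReal this)
    exact le_antisymm (ge_of_tendsto htend (Filter.Eventually.of_forall hb)) (zero_le)
  have : Set.Ioi r = ⋃ n : ℕ, Set.Ioi (r + 1 / (n + 1)) := by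
    ext x
    simp only [Set.mem_Ioi, Set.mem_iUnion]
    constructor
    · intro hx
      obtain ⟨n, hn⟩ := exists_nat_one_div_lt (sub_pos.mpr hx)
      exact ⟨n, by linarith⟩
    · rintro ⟨n, hn⟩
      have : (0:ℝ) < 1 / (n + 1) := by positivity
      linarith
  rw [this]
  refine measure_iUnion_null fun n => key _ ?_
  have : (0:ℝ) < 1 / (n + 1) := by positivity
  linarith
/-- `prodMeas ν k` is the distribution of the product of `k+1` independent copies of `ν`. -/
noncomputable def prodMeas (ν : Measure ℝ) : ℕ → Measure ℝ
  | 0 => ν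
  | k+1 => ((ν.prod (prodMeas ν k)).map (fun p => p.1 * p.2))

lemma prodMeas_finite (ν : Measure ℝ) [IsFiniteMeasure ν] (k : ℕ) :
    IsFiniteMeasure (prodMeas ν k) := by
  induction k with
  | zero => exact ‹_›
  | succ k ih =>
    haveI := ih
    constructor
    rw [prodMeas, Measure.map_apply (by fun_prop) MeasurableSet.univ, Set.preimage_univ]
    exact measure_lt_top _ _

lemma prodMeas_rep {b : ℕ → ℝ} {ν : Measure ℝ} (hb : IsRepMeas b ν) (k : ℕ) :
    IsRepMeas (fun n => b n ^ (k + 1)) (prodMeas ν k) := by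
  haveI := rep_finite hb
  induction k with
  | zero => simpa [prodMeas] using hb
  | succ k ih =>
    haveI := prodMeas_finite ν k
    set ρ := prodMeas ν k with hρ
    set P := ν.prod ρ with hP
    have hmul : Measurable (fun p : ℝ × ℝ => p.1 * p.2) := by fun_prop
    have hae : ∀ᵐ p : ℝ × ℝ ∂P, 0 ≤ p.1 ∧ 0 ≤ p.2 := by
      rw [MeasureTheory.ae_iff]
      have hsub : {p : ℝ × ℝ | ¬(0 ≤ p.1 ∧ 0 ≤ p.2)} ⊆
          (Set.Iio 0 ×ˢ Set.univ) ∪ (Set.univ ×ˢ Set.Iio 0) := by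
        intro p hp
        simp only [Set.mem_setOf_eq, not_and_or, not_le] at hp
        rcases hp with h | h
        · exact Or.inl (by simp [h])
        · exact Or.inr (by simp [h])
      refine measure_mono_null hsub (measure_union_null ?_ ?_)
      · rw [Measure.prod_prod, hb.2.1, zero_mul]
      · rw [Measure.prod_prod, ih.2.1, mul_zero]
    refine ⟨fun n => pow_nonneg (hb.1 n) _, ?_, ?_⟩
    · rw [prodMeas, Measure.map_apply hmul measurableSet_Iio]
      have hsub : (fun p : ℝ × ℝ => p.1 * p.2) ⁻¹' Set.Iio 0 ⊆
          (Set.Iio 0 ×ˢ (Set.univ : Set ℝ)) ∪ ((Set.univ : Set ℝ) ×ˢ Set.Iio 0) := by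
        intro p hp
        simp only [Set.mem_preimage, Set.mem_Iio] at hp
        by_contra hc
        simp only [Set.mem_union, Set.mem_prod, Set.mem_Iio, Set.mem_univ, and_true,
          true_and, not_or, not_lt] at hc
        nlinarith [mul_nonneg hc.1 hc.2]
      refine measure_mono_null hsub (measure_union_null ?_ ?_)
      · rw [Measure.prod_prod, hb.2.1, zero_mul]
      · rw [Measure.prod_prod, ih.2.1, mul_zero]
    · intro n
      rw [prodMeas, lintegral_map (by fun_prop) hmul]
      have : ∫⁻ p : ℝ × ℝ, ENNReal.ofReal ((p.1 * p.2) ^ n) ∂P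
          = ∫⁻ p : ℝ × ℝ, ENNReal.ofReal (p.1 ^ n) * ENNReal.ofReal (p.2 ^ n) ∂P := by
        refine lintegral_congr_ae ?_
        filter_upwards [hae] with p hp
        rw [mul_pow, ENNReal.ofReal_mul (pow_nonneg hp.1 n)]
      rw [this, hP, lintegral_prod_mul (f := fun x => ENNReal.ofReal (x ^ n))
        (g := fun x => ENNReal.ofReal (x ^ n)) (by fun_prop) (by fun_prop), hb.2.2 n, ih.2.2 n,
        ← ENNReal.ofReal_mul (hb.1 n), ← pow_succ']
lemma prodMeas_lb (ν : Measure ℝ) [IsFiniteMeasure ν] {p q c d : ℝ}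
    (hp : 0 ≤ p) (hc : 0 ≤ c) (k : ℕ) :
    ν (Set.Icc p q) * ν (Set.Ioc c d) ^ k ≤ prodMeas ν k (Set.Icc (p * c ^ k) (q * d ^ k)) := by
  induction k with
  | zero => simp [prodMeas]
  | succ k ih =>
    haveI := prodMeas_finite ν k
    have hmul : Measurable (fun r : ℝ × ℝ => r.1 * r.2) := by fun_prop
    rw [prodMeas, Measure.map_apply hmul measurableSet_Icc]
    have hsub : Set.Ioc c d ×ˢ Set.Icc (p * c ^ k) (q * d ^ k) ⊆
        (fun r : ℝ × ℝ => r.1 * r.2) ⁻¹' Set.Icc (p * c ^ (k+1)) (q * d ^ (k+1)) := by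
      rintro ⟨y, z⟩ ⟨⟨hy1, hy2⟩, hz1, hz2⟩
      have hy0 : 0 < y := lt_of_le_of_lt hc hy1
      have hz0 : 0 ≤ z := le_trans (by positivity) hz1
      have hd0 : 0 < d := lt_of_lt_of_le hy0 hy2
      constructor
      · calc p * c ^ (k+1) = c * (p * c ^ k) := by ring
          _ ≤ y * z := mul_le_mul hy1.le hz1 (by positivity) hy0.le
      · calc y * z ≤ d * (q * d ^ k) := mul_le_mul hy2 hz2 hz0 hd0.le
          _ = q * d ^ (k+1) := by ring
    calc ν (Set.Icc p q) * ν (Set.Ioc c d) ^ (k+1)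
        = ν (Set.Ioc c d) * (ν (Set.Icc p q) * ν (Set.Ioc c d) ^ k) := by ring
      _ ≤ ν (Set.Ioc c d) * prodMeas ν k (Set.Icc (p * c ^ k) (q * d ^ k)) := by
          exact mul_le_mul_right ih _
      _ = (ν.prod (prodMeas ν k)) (Set.Ioc c d ×ˢ Set.Icc (p * c ^ k) (q * d ^ k)) := by
          rw [Measure.prod_prod]
      _ ≤ _ := measure_mono hsub

lemma msupport_compl_null (μ : Measure ℝ) : μ (msupport μ)ᶜ = 0 := by
  have hch : ∀ x : ((msupport μ)ᶜ : Set ℝ), ∃ U : Set ℝ, IsOpen U ∧ (x:ℝ) ∈ U ∧ μ U = 0 := by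
    rintro ⟨x, hx⟩
    simp only [Set.mem_compl_iff, msupport, Set.mem_setOf_eq, not_forall] at hx
    obtain ⟨U, hU, hxU, hpos⟩ := hx
    exact ⟨U, hU, hxU, le_antisymm (not_lt.mp hpos) (zero_le)⟩
  choose U hUopen hUx hUnull using hch
  obtain ⟨T, hTc, hTeq⟩ := TopologicalSpace.isOpen_iUnion_countable U hUopen
  have hsub : (msupport μ)ᶜ ⊆ ⋃ x ∈ T, U x := by
    rw [hTeq]
    intro x hx
    exact Set.mem_iUnion.mpr ⟨⟨x, hx⟩, hUx _⟩
  exact measure_mono_null hsub ((measure_biUnion_null_iff hTc).mpr fun x _ => hUnull x)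

lemma null_of_ub {μ : Measure ℝ} {θ3 r : ℝ} (hlub : IsLUB (msupport μ) θ3) (hr : θ3 ≤ r) :
    μ (Set.Ioi r) = 0 := by
  refine measure_mono_null (fun x hx => ?_) (msupport_compl_null μ)
  simp only [Set.mem_Ioi] at hx
  intro hmem
  exact absurd (le_trans (hlub.1 hmem) hr) (not_le.mpr hx)

lemma ub_of_null {μ : Measure ℝ} {θ3 r : ℝ} (hlub : IsLUB (msupport μ) θ3)
    (hr : μ (Set.Ioi r) = 0) : θ3 ≤ r := by
  refine hlub.2 (fun x hx => ?_)
  by_contra hc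
  push_neg at hc
  exact absurd (hx _ isOpen_Ioi hc) (by simp [hr])

lemma exists_Icc_pos {ν : Measure ℝ} {u v : ℝ} (h : ν (Set.Ioo u v) ≠ 0) :
    ∃ p q : ℝ, u < p ∧ q < v ∧ p ≤ q ∧ ν (Set.Icc p q) ≠ 0 := by
  by_contra hc
  push_neg at hc
  apply h
  have huv : u < v := by
    by_contra hle
    simp [Set.Ioo_eq_empty (by push_neg at hle; exact not_lt.mpr hle)] at h
  have hsub : Set.Ioo u v ⊆ ⋃ n : ℕ, Set.Icc (u + (v - u) / (n + 2)) (v - (v - u) / (n + 2)) := by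
    intro x ⟨hx1, hx2⟩
    have hmin : 0 < min (x - u) (v - x) := by
      simp only [lt_min_iff]; constructor <;> linarith
    obtain ⟨n, hn⟩ := exists_nat_gt ((v - u) / min (x - u) (v - x))
    refine Set.mem_iUnion.mpr ⟨n, ?_, ?_⟩
    · have : (v - u) / (n + 2) < min (x - u) (v - x) := by
        rw [div_lt_iff₀ (by positivity)]
        rw [div_lt_iff₀ hmin] at hn
        nlinarith [hmin, min_le_left (x-u) (v-x), min_le_right (x-u) (v-x)]
      have := lt_of_lt_of_le this (min_le_left _ _)
      linarith
    · have : (v - u) / (n + 2) < min (x - u) (v - x) := by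
        rw [div_lt_iff₀ (by positivity)]
        rw [div_lt_iff₀ hmin] at hn
        nlinarith [hmin, min_le_left (x-u) (v-x), min_le_right (x-u) (v-x)]
      have := lt_of_lt_of_le this (min_le_right _ _)
      linarith
  refine measure_mono_null hsub (measure_iUnion_null fun n => ?_)
  rcases le_or_gt (u + (v - u) / (n + 2)) (v - (v - u) / (n + 2)) with hle | hlt
  · have hpos : (0:ℝ) < (v - u) / (n + 2) := div_pos (by linarith) (by positivity)
    exact hc _ _ (by linarith) (by linarith) hle
  · rw [Set.Icc_eq_empty (not_le.mpr hlt)]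
    exact measure_empty
lemma rep_integrable_pow {a : ℕ → ℝ} {μ : Measure ℝ} (h : IsRepMeas a μ) (n : ℕ) :
    Integrable (fun x : ℝ => x ^ n) μ := by
  refine ⟨(by fun_prop : Measurable fun x : ℝ => x ^ n).aestronglyMeasurable, ?_⟩
  have hnn : 0 ≤ᵐ[μ] fun x : ℝ => x ^ n := by
    filter_upwards [rep_ae_nonneg h] with x hx
    exact pow_nonneg hx n
  rw [MeasureTheory.hasFiniteIntegral_iff_ofReal hnn, h.2.2 n]
  exact ENNReal.ofReal_lt_top

lemma rep_integral_pow {a : ℕ → ℝ} {μ : Measure ℝ} (h : IsRepMeas a μ) (n : ℕ) :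
    ∫ x, x ^ n ∂μ = a n := by
  have hnn : 0 ≤ᵐ[μ] fun x : ℝ => x ^ n := by
    filter_upwards [rep_ae_nonneg h] with x hx
    exact pow_nonneg hx n
  rw [integral_eq_lintegral_of_nonneg_ae hnn
    ((by fun_prop : Measurable fun x : ℝ => x ^ n).aestronglyMeasurable), h.2.2 n,
    ENNReal.toReal_ofReal (h.1 n)]

lemma rep_integrable_poly {a : ℕ → ℝ} {μ : Measure ℝ} (h : IsRepMeas a μ) (P : Polynomial ℝ) :
    Integrable (fun x : ℝ => P.eval x) μ := by
  have : (fun x : ℝ => P.eval x)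
      = fun x => ∑ i ∈ Finset.range (P.natDegree + 1), P.coeff i * x ^ i := by
    funext x; exact Polynomial.eval_eq_sum_range x
  rw [this]
  exact integrable_finset_sum _ fun i _ => (rep_integrable_pow h i).const_mul _

lemma rep_integral_poly {a : ℕ → ℝ} {μ : Measure ℝ} (h : IsRepMeas a μ) (P : Polynomial ℝ) :
    ∫ x, P.eval x ∂μ = ∑ i ∈ Finset.range (P.natDegree + 1), P.coeff i * a i := by
  have : (fun x : ℝ => P.eval x)
      = fun x => ∑ i ∈ Finset.range (P.natDegree + 1), P.coeff i * x ^ i := by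
    funext x; exact Polynomial.eval_eq_sum_range x
  rw [this, integral_finset_sum _ fun i _ => (rep_integrable_pow h i).const_mul _]
  refine Finset.sum_congr rfl fun i _ => ?_
  rw [integral_const_mul, rep_integral_pow h i]

lemma poly_approx (f : ℝ → ℝ) (hf : Continuous f) (A B ε : ℝ) (hε : 0 < ε) :
    ∃ P : Polynomial ℝ, ∀ x ∈ Set.Icc A B, |f x - P.eval x| ≤ ε := by
  set F : C(Set.Icc A B, ℝ) := ⟨fun x => f x, hf.comp continuous_subtype_val⟩ with hF
  obtain ⟨P, hP⟩ := exists_polynomial_near_continuousMap A B F ε hε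
  refine ⟨P, fun x hx => ?_⟩
  have := ContinuousMap.norm_coe_le_norm (P.toContinuousMapOn (Set.Icc A B) - F) ⟨x, hx⟩
  have h2 : |P.eval x - f x| ≤ ‖P.toContinuousMapOn (Set.Icc A B) - F‖ := by
    simpa [Polynomial.toContinuousMapOn, Polynomial.toContinuousMap, hF, Real.norm_eq_abs]
      using this
  rw [abs_sub_comm]
  exact le_trans h2 hP.le

/-- Core separation argument: two representing measures of the same moment sequence,
both living on `[0, θ3]`; if one vanishes on the open interval `(θ1, θ2)` then the
other vanishes on any compact subinterval. -/
lemma hole_transfer {a : ℕ → ℝ} {μ ρ : Measure ℝ} (hμ : IsRepMeas a μ) (hρ : IsRepMeas a ρ)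
    {θ1 θ2 L U θ3 : ℝ}
    (hμtop : μ (Set.Ioi θ3) = 0) (hρtop : ρ (Set.Ioi θ3) = 0)
    (hhole : μ (Set.Ioo θ1 θ2) = 0) (hL : θ1 < L) (hU : U < θ2) :
    ρ (Set.Icc L U) = 0 := by
  haveI := rep_finite hμ
  haveI := rep_finite hρ
  by_contra hK
  set f : ℝ → ℝ := fun x =>
    max 0 (min 1 (min ((x - θ1) / (L - θ1)) ((θ2 - x) / (θ2 - U)))) with hfdef
  have hcont : Continuous f := by
    apply continuous_const.max
    apply continuous_const.min
    exact (((continuous_id.sub continuous_const).div_const _).min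
      ((continuous_const.sub continuous_id).div_const _))
  have hf0 : ∀ x, 0 ≤ f x := fun x => le_max_left _ _
  have hf1 : ∀ x, f x ≤ 1 := fun x => max_le zero_le_one (min_le_left _ _)
  have hfK : ∀ x ∈ Set.Icc L U, f x = 1 := by
    rintro x ⟨hx1, hx2⟩
    have h1 : (1:ℝ) ≤ (x - θ1) / (L - θ1) := by
      rw [le_div_iff₀ (by linarith)]
      linarith
    have h2 : (1:ℝ) ≤ (θ2 - x) / (θ2 - U) := by
      rw [le_div_iff₀ (by linarith)]
      linarith
    simp only [hfdef]
    rw [min_eq_left (le_min h1 h2), max_eq_right zero_le_one]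
  have hfout : ∀ x, x ∉ Set.Ioo θ1 θ2 → f x = 0 := by
    intro x hx
    simp only [Set.mem_Ioo, not_and_or, not_lt] at hx
    have : min ((x - θ1) / (L - θ1)) ((θ2 - x) / (θ2 - U)) ≤ 0 := by
      rcases hx with h | h
      · exact le_trans (min_le_left _ _) (div_nonpos_iff.mpr (Or.inr ⟨by linarith, by linarith⟩))
      · exact le_trans (min_le_right _ _) (div_nonpos_iff.mpr (Or.inr ⟨by linarith, by linarith⟩))
    simp only [hfdef]
    rw [max_eq_left (le_trans (min_le_right _ _) this)]
  -- f is integrable w.r.t. both measures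
  have hfint : ∀ (m : Measure ℝ), IsFiniteMeasure m → Integrable f m := by
    intro m _
    refine Integrable.mono' (integrable_const 1) hcont.aestronglyMeasurable ?_
    filter_upwards with x
    rw [Real.norm_eq_abs, abs_of_nonneg (hf0 x)]
    exact hf1 x
  -- ∫ f dμ = 0
  have hintμ : ∫ x, f x ∂μ = 0 := by
    have : f =ᵐ[μ] 0 := by
      rw [Filter.eventuallyEq_iff_exists_mem]
      refine ⟨(Set.Ioo θ1 θ2)ᶜ, ?_, fun x hx => hfout x hx⟩
      rw [MeasureTheory.mem_ae_iff, compl_compl]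
      exact hhole
    rw [integral_congr_ae this]; simp
  -- ∫ f dρ ≥ ρ(Icc L U)
  have hintρ : (ρ (Set.Icc L U)).toReal ≤ ∫ x, f x ∂ρ := by
    have h1 : (ρ (Set.Icc L U)).toReal = ∫ x in Set.Icc L U, f x ∂ρ := by
      rw [setIntegral_congr_fun measurableSet_Icc hfK]
      simp
      rfl
    rw [h1]
    exact setIntegral_le_integral (hfint ρ ‹_›) (Filter.Eventually.of_forall hf0)
  -- measures live on [0, θ3]
  have haeIcc : ∀ (m : Measure ℝ), IsRepMeas a m → m (Set.Ioi θ3) = 0 →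
      ∀ᵐ x ∂m, x ∈ Set.Icc 0 θ3 := by
    intro m hm htop
    rw [MeasureTheory.ae_iff]
    have : {x : ℝ | x ∉ Set.Icc 0 θ3} ⊆ Set.Iio 0 ∪ Set.Ioi θ3 := by
      intro x hx
      simp only [Set.mem_setOf_eq, Set.mem_Icc, not_and_or, not_le] at hx
      rcases hx with h | h
      · exact Or.inl h
      · exact Or.inr h
    exact measure_mono_null this (measure_union_null hm.2.1 htop)
  -- the ε-argument
  have hmain : ∀ ε : ℝ, 0 < ε →
      (ρ (Set.Icc L U)).toReal ≤ ε * ((μ Set.univ).toReal + (ρ Set.univ).toReal) := by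
    intro ε hε
    obtain ⟨P, hP⟩ := poly_approx f hcont 0 θ3 ε hε
    have hPμ : |∫ x, (f x - P.eval x) ∂μ| ≤ ε * (μ Set.univ).toReal := by
      have := norm_integral_le_of_norm_le_const (μ := μ)
        (f := fun x => f x - P.eval x) (C := ε) ?_
      · simpa [Real.norm_eq_abs, Measure.real] using this
      · filter_upwards [haeIcc μ hμ hμtop] with x hx
        rw [Real.norm_eq_abs]
        exact hP x hx
    have hPρ : |∫ x, (P.eval x - f x) ∂ρ| ≤ ε * (ρ Set.univ).toReal := by
      have := norm_integral_le_of_norm_le_const (μ := ρ)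
        (f := fun x => P.eval x - f x) (C := ε) ?_
      · simpa [Real.norm_eq_abs, Measure.real] using this
      · filter_upwards [haeIcc ρ hρ hρtop] with x hx
        rw [Real.norm_eq_abs, abs_sub_comm]
        exact hP x hx
    have hPint : ∫ x, P.eval x ∂μ = ∫ x, P.eval x ∂ρ := by
      rw [rep_integral_poly hμ, rep_integral_poly hρ]
    have e1 : ∫ x, (f x - P.eval x) ∂μ
        = ∫ x, f x ∂μ - ∫ x, P.eval x ∂μ :=
      integral_sub (hfint μ ‹_›) (rep_integrable_poly hμ P)
    have e2 : ∫ x, (P.eval x - f x) ∂ρ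
        = ∫ x, P.eval x ∂ρ - ∫ x, f x ∂ρ :=
      integral_sub (rep_integrable_poly hρ P) (hfint ρ ‹_›)
    have habs1 := abs_le.mp hPμ
    have habs2 := abs_le.mp hPρ
    rw [e1, hintμ] at habs1
    rw [e2] at habs2
    have := hintρ
    nlinarith [habs1.1, habs1.2, habs2.1, habs2.2]
  have hpos : 0 < (ρ (Set.Icc L U)).toReal := by
    refine ENNReal.toReal_pos hK (measure_ne_top _ _)
  set M := (μ Set.univ).toReal + (ρ Set.univ).toReal with hM
  have hM0 : 0 ≤ M := by positivity
  have := hmain ((ρ (Set.Icc L U)).toReal / (2 * (M + 1))) (by positivity)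
  have hlt : (ρ (Set.Icc L U)).toReal / (2 * (M + 1)) * M < (ρ (Set.Icc L U)).toReal := by
    rw [div_mul_eq_mul_div, div_lt_iff₀ (by positivity)]
    nlinarith
  linarith
theorem stmt8 (a : ℕ → ℝ) (μ ν : Measure ℝ) (κ : ℕ) (hκ : 2 ≤ κ)
    (hμ : IsRepMeas a μ)
    (hν : IsRepMeas (fun n => a n ^ (1 / (κ : ℝ))) ν)
    (θ1 θ2 : ℝ) (h0 : 0 ≤ θ1) (h12 : θ1 < θ2)
    (hhole : μ (Set.Ioo θ1 θ2) = 0) :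
    (IsDeterminate a →
      ν (Set.Ioo (θ1 ^ (1 / (κ : ℝ))) (θ2 ^ (1 / (κ : ℝ)))) = 0) ∧
    (∀ θ3 : ℝ, θ2 ≤ θ3 → IsLUB (msupport μ) θ3 →
      ν (Set.Ioo (θ1 / θ3 * θ3 ^ (1 / (κ : ℝ))) (θ2 / θ3 * θ3 ^ (1 / (κ : ℝ)))) = 0) := by
  haveI := rep_finite hμ
  haveI := rep_finite hν
  set b : ℕ → ℝ := fun n => a n ^ (1 / (κ : ℝ)) with hbdef
  have hκ0 : (κ : ℝ) ≠ 0 := Nat.cast_ne_zero.mpr (by omega)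
  obtain ⟨k, hk⟩ : ∃ k, κ = k + 1 := ⟨κ - 1, by omega⟩
  have hk1 : 1 ≤ k := by omega
  have hba : ∀ x : ℝ, 0 ≤ x → (x ^ (1 / (κ:ℝ))) ^ κ = x := by
    intro x hx
    rw [← Real.rpow_natCast (x ^ (1/(κ:ℝ))) κ, ← Real.rpow_mul hx, one_div,
      inv_mul_cancel₀ hκ0, Real.rpow_one]
  have hfun : (fun n => b n ^ (k + 1)) = a := by
    funext n
    rw [← hk]
    exact hba (a n) (hμ.1 n)
  have hρrep : IsRepMeas a (prodMeas ν k) := hfun ▸ prodMeas_rep hν k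
  haveI := prodMeas_finite ν k
  constructor
  · -- part (i)
    intro hdet
    have hmeq : μ = prodMeas ν k := hdet _ _ hμ hρrep
    by_contra hne
    obtain ⟨p, q, hup, hqv, hpq, hIcc⟩ := exists_Icc_pos hne
    set u := θ1 ^ (1/(κ:ℝ)) with hu
    set v := θ2 ^ (1/(κ:ℝ)) with hv
    have hu0 : 0 ≤ u := Real.rpow_nonneg h0 _
    set c := (u + p) / 2 with hc
    have huc : u < c := by simp only [hc]; linarith
    have hcp : c < p := by simp only [hc]; linarith
    have hcpos : 0 < c := lt_of_le_of_lt hu0 huc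
    have hq0 : 0 ≤ q := le_trans (le_trans hu0 (le_of_lt (lt_trans huc hcp))) hpq
    have hIoc : ν (Set.Ioc c q) ≠ 0 := by
      intro h
      refine hIcc (measure_mono_null (fun x hx => ?_) h)
      simp only [Set.mem_Icc] at hx
      exact Set.mem_Ioc.mpr ⟨lt_of_lt_of_le hcp hx.1, hx.2⟩
    have hbound := prodMeas_lb ν (p := p) (q := q) (c := c) (d := q)
      (by linarith) hcpos.le k
    have hL : θ1 < p * c ^ k := by
      have h1 : u ^ (k+1) = θ1 := by rw [← hk]; exact hba θ1 h0
      have h2 : u ^ k ≤ c ^ k := pow_le_pow_left₀ hu0 huc.le k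
      have h3 : (0:ℝ) < c ^ k := pow_pos hcpos k
      calc θ1 = u * u ^ k := by rw [← h1]; ring
        _ ≤ u * c ^ k := mul_le_mul_of_nonneg_left h2 hu0
        _ < p * c ^ k := by nlinarith [lt_trans huc hcp]
    have hU : q * q ^ k < θ2 := by
      have h1 : v ^ (k+1) = θ2 := by rw [← hk]; exact hba θ2 (le_trans h0 h12.le)
      have h2 : q ^ (k+1) < v ^ (k+1) := pow_lt_pow_left₀ hqv hq0 (by omega)
      calc q * q ^ k = q ^ (k+1) := by ring
        _ < θ2 := h1 ▸ h2
    have hnull : prodMeas ν k (Set.Icc (p * c ^ k) (q * q ^ k)) = 0 := by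
      refine measure_mono_null (fun x hx => ?_) (hmeq ▸ hhole)
      simp only [Set.mem_Icc] at hx
      exact Set.mem_Ioo.mpr ⟨lt_of_lt_of_le hL hx.1, lt_of_le_of_lt hx.2 hU⟩
    rw [hnull] at hbound
    exact absurd (le_antisymm hbound (zero_le))
      (mul_ne_zero hIcc (pow_ne_zero _ hIoc))
  · -- part (ii)
    intro θ3 hθ23 hlub
    have hθ3pos : 0 < θ3 := by linarith
    set w := θ3 ^ (1/(κ:ℝ)) with hw
    have hwpos : 0 < w := Real.rpow_pos_of_pos hθ3pos _
    have hwκ : w ^ κ = θ3 := hba θ3 hθ3pos.le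
    have hμtop : μ (Set.Ioi θ3) = 0 := null_of_ub hlub le_rfl
    have haup : ∀ n, a n ≤ a 0 * θ3 ^ n := by
      intro n
      have h1 : ENNReal.ofReal (a n) ≤ ENNReal.ofReal (θ3 ^ n) * μ Set.univ :=
        (hμ.2.2 n) ▸ moment_le (rep_ae_nonneg hμ) hμtop n
      rw [rep_univ hμ, ← ENNReal.ofReal_mul (pow_nonneg hθ3pos.le n)] at h1
      have h2 := (ENNReal.ofReal_le_ofReal_iff
        (mul_nonneg (pow_nonneg hθ3pos.le n) (hμ.1 0))).mp h1
      rw [mul_comm]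
      exact h2
    have hrpow_pow : ∀ x n', 0 ≤ x → ((x ^ n' : ℝ)) ^ (1/(κ:ℝ)) = (x ^ (1/(κ:ℝ))) ^ n' := by
      intro x n' hx
      rw [← Real.rpow_natCast x n', ← Real.rpow_mul hx, mul_comm, Real.rpow_mul hx,
        Real.rpow_natCast]
    have hbup : ∀ n, b n ≤ b 0 * w ^ n := by
      intro n
      have h1 : b n ≤ (a 0 * θ3 ^ n) ^ (1/(κ:ℝ)) :=
        Real.rpow_le_rpow (hμ.1 n) (haup n) (by positivity)
      rwa [Real.mul_rpow (hμ.1 0) (pow_nonneg hθ3pos.le n),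
        hrpow_pow θ3 n hθ3pos.le] at h1
    have hb0 : 0 ≤ b 0 := Real.rpow_nonneg (hμ.1 0) _
    have hνtail : ν (Set.Ioi w) = 0 := by
      refine tail_null (C := b 0) hwpos.le (fun n => ?_)
      rw [hν.2.2 n]
      exact ENNReal.ofReal_le_ofReal (hbup n)
    have hnear : ∀ c : ℝ, 0 ≤ c → c < w → ν (Set.Ioi c) ≠ 0 := by
      intro c hc0 hcw hnull
      have hbup2 : ∀ n, b n ≤ b 0 * c ^ n := by
        intro n
        have h1 : ENNReal.ofReal (b n) ≤ ENNReal.ofReal (c ^ n) * ν Set.univ :=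
          (hν.2.2 n) ▸ moment_le (rep_ae_nonneg hν) hnull n
        rw [rep_univ hν, ← ENNReal.ofReal_mul (pow_nonneg hc0 n)] at h1
        have h2 := (ENNReal.ofReal_le_ofReal_iff
          (mul_nonneg (pow_nonneg hc0 n) hb0)).mp h1
        rw [mul_comm]
        exact h2
      have haup2 : ∀ n, a n ≤ a 0 * (c ^ κ) ^ n := by
        intro n
        have hbn : 0 ≤ b n := Real.rpow_nonneg (hμ.1 n) _
        have e1 : b n ^ (k+1) = a n := congrFun hfun n
        have e0 : b 0 ^ (k+1) = a 0 := congrFun hfun 0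
        calc a n = b n ^ (k+1) := e1.symm
          _ ≤ (b 0 * c ^ n) ^ (k+1) := pow_le_pow_left₀ hbn (hbup2 n) _
          _ = b 0 ^ (k+1) * (c ^ (k+1)) ^ n := by rw [mul_pow, ← pow_mul, ← pow_mul, Nat.mul_comm]
          _ = a 0 * (c ^ κ) ^ n := by rw [e0, hk]
      have hμtail2 : μ (Set.Ioi (c ^ κ)) = 0 := by
        refine tail_null (C := a 0) (pow_nonneg hc0 κ) (fun n => ?_)
        rw [hμ.2.2 n]
        exact ENNReal.ofReal_le_ofReal (haup2 n)
      have h3 := ub_of_null hlub hμtail2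
      have h4 : c ^ κ < w ^ κ := pow_lt_pow_left₀ hcw hc0 (by omega)
      rw [hwκ] at h4
      linarith
    by_contra hne
    obtain ⟨p, q, hsp, hqt, hpq, hIcc⟩ := exists_Icc_pos hne
    have hs0 : 0 ≤ θ1 / θ3 * w := by positivity
    have hp0 : 0 < p := lt_of_le_of_lt hs0 hsp
    have hW : 0 < w ^ k := pow_pos hwpos k
    have hwwk : w * w ^ k = θ3 := by rw [← pow_succ', ← hk, hwκ]
    have hθ1eq : θ1 / θ3 * w * w ^ k = θ1 := by
      rw [mul_assoc, hwwk]
      field_simp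
    have hθ2eq : θ2 / θ3 * w * w ^ k = θ2 := by
      rw [mul_assoc, hwwk]
      field_simp
    have hpw : 0 < p * w ^ k := by positivity
    have hq0 : θ1 < p * w ^ k := by nlinarith
    set q1 := (θ1 / (p * w ^ k) + 1) / 2 with hq1def
    have hr0 : 0 ≤ θ1 / (p * w ^ k) := by positivity
    have hr1 : θ1 / (p * w ^ k) < 1 := (div_lt_one hpw).mpr hq0
    have hq1pos : 0 < q1 := by simp only [hq1def]; linarith
    have hq1lt : q1 < 1 := by simp only [hq1def]; linarith
    have hq1gt : θ1 / (p * w ^ k) < q1 := by simp only [hq1def]; linarith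
    set γ := q1 ^ (1/(k:ℝ)) with hγdef
    have hk0 : (k : ℝ) ≠ 0 := Nat.cast_ne_zero.mpr (by omega)
    have hγpos : 0 < γ := Real.rpow_pos_of_pos hq1pos _
    have hγ1 : γ < 1 := Real.rpow_lt_one hq1pos.le hq1lt
      (by positivity)
    have hγk : γ ^ k = q1 := by
      rw [hγdef, ← Real.rpow_natCast (q1 ^ (1/(k:ℝ))) k, ← Real.rpow_mul hq1pos.le, one_div,
        inv_mul_cancel₀ hk0, Real.rpow_one]
    set c := γ * w with hcdef
    have hc0 : 0 < c := mul_pos hγpos hwpos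
    have hcw : c < w := by
      rw [hcdef]
      nlinarith
    have hIoc : ν (Set.Ioc c w) ≠ 0 := by
      intro h
      refine hnear c hc0.le hcw ?_
      have hsplit : Set.Ioi c ⊆ Set.Ioc c w ∪ Set.Ioi w := by
        intro x hx
        simp only [Set.mem_Ioi] at hx
        rcases le_or_gt x w with h' | h'
        · exact Or.inl (Set.mem_Ioc.mpr ⟨hx, h'⟩)
        · exact Or.inr h'
      exact measure_mono_null hsplit (measure_union_null h hνtail)
    have hbound := prodMeas_lb ν (p := p) (q := q) (c := c) (d := w) hp0.le hc0.le k
    have hL : θ1 < p * c ^ k := by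
      have e1 : c ^ k = q1 * w ^ k := by rw [hcdef, mul_pow, hγk]
      have e2 : θ1 = θ1 / (p * w ^ k) * (p * w ^ k) := (div_mul_cancel₀ _ hpw.ne').symm
      calc θ1 = θ1 / (p * w ^ k) * (p * w ^ k) := e2
        _ < q1 * (p * w ^ k) := by
            exact mul_lt_mul_of_pos_right hq1gt hpw
        _ = p * c ^ k := by rw [e1]; ring
    have hU : q * w ^ k < θ2 := by nlinarith
    have hρtop : prodMeas ν k (Set.Ioi θ3) = 0 := by
      refine tail_null (C := a 0) hθ3pos.le (fun n => ?_)
      rw [hρrep.2.2 n]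
      exact ENNReal.ofReal_le_ofReal (haup n)
    have hρK : prodMeas ν k (Set.Icc (p * c ^ k) (q * w ^ k)) = 0 :=
      hole_transfer hμ hρrep hμtop hρtop hhole hL hU
    rw [hρK] at hbound
    exact absurd (le_antisymm hbound (zero_le))
      (mul_ne_zero hIcc (pow_ne_zero _ hIoc))
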